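/- Let G be a graph on n vertices of diameter 3 with centroidal dimension CD(G) = k ≥ 5. Then n ≤ 3^k − 2^{k+1} + 2. -/

import Mathlib

open SimpleGraph

/-- A set `B` is a centroidal locating set of `G` if every pair of distinct vertices is
distinguished by the relative distances to two vertices of `B`. -/
def CentroidalLocating {V : Type*} (G : SimpleGraph V) (B : Set V) : Prop :=
  ∀ ⦃x y : V⦄, x ≠ y → ∃ b1 ∈ B, ∃ b2 ∈ B,
    (G.dist x b1 ≤ G.dist x b2 ∧ G.dist y b2 < G.dist y b1) ∨
    (G.dist y b1 ≤ G.dist y b2 ∧ G.dist x b2 < G.dist x b1)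

/-- The centroidal dimension: minimum size of a centroidal locating set. -/
noncomputable def CD {V : Type*} (G : SimpleGraph V) : ℕ :=
  sInf {k | ∃ B : Set V, B.ncard = k ∧ CentroidalLocating G B}

/-! ### Auxiliary rank machinery -/

/-- rank of `b` under `f`: number of distinct values of `f` strictly below `f b`. -/
def rnkAux {β : Type*} [Fintype β] (f : β → ℕ) (b : β) : ℕ :=
  ((Finset.univ.image f).filter (· < f b)).card

section RnkAux

variable {β : Type*} [Fintype β]

lemma rnkAux_lt_rnkAux (f : β → ℕ) {b1 b2 : β} (h : f b1 < f b2) :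
    rnkAux f b1 < rnkAux f b2 := by
  apply Finset.card_lt_card
  constructor
  · intro v hv
    simp only [Finset.mem_filter] at hv ⊢
    exact ⟨hv.1, hv.2.trans h⟩
  · intro hsub
    have : f b1 ∈ (Finset.univ.image f).filter (· < f b2) := by
      simp only [Finset.mem_filter, Finset.mem_image]
      exact ⟨⟨b1, Finset.mem_univ _, rfl⟩, h⟩
    have h2 := hsub this
    simp only [Finset.mem_filter] at h2
    exact absurd h2.2 (lt_irrefl _)

lemma rnkAux_mono (f : β → ℕ) {b1 b2 : β} (h : f b1 ≤ f b2) :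
    rnkAux f b1 ≤ rnkAux f b2 := by
  apply Finset.card_le_card
  intro v hv
  simp only [Finset.mem_filter] at hv ⊢
  exact ⟨hv.1, lt_of_lt_of_le hv.2 h⟩

lemma rnkAux_le_iff (f : β → ℕ) (b1 b2 : β) :
    rnkAux f b1 ≤ rnkAux f b2 ↔ f b1 ≤ f b2 := by
  constructor
  · intro h
    by_contra hc
    exact absurd (rnkAux_lt_rnkAux f (by omega : f b2 < f b1)) (by omega)
  · exact rnkAux_mono f

lemma rnkAux_lt_iff (f : β → ℕ) (b1 b2 : β) :
    rnkAux f b1 < rnkAux f b2 ↔ f b1 < f b2 := by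
  have h1 := rnkAux_le_iff f b1 b2
  have h2 := rnkAux_le_iff f b2 b1
  omega

lemma rnkAux_le_self (f : β → ℕ) (b : β) : rnkAux f b ≤ f b := by
  have : ((Finset.univ.image f).filter (· < f b)) ⊆ Finset.range (f b) := by
    intro v hv
    simp only [Finset.mem_filter] at hv
    simpa using hv.2
  simpa [rnkAux] using Finset.card_le_card this

lemma rnkAux_pred (f : β → ℕ) {b : β} {m : ℕ} (h : rnkAux f b = m + 1) :
    ∃ c, rnkAux f c = m := by
  set S := (Finset.univ.image f).filter (· < f b) with hS
  have hne : S.Nonempty := by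
    rw [← Finset.card_pos]
    rw [rnkAux] at h
    rw [hS]
    omega
  obtain ⟨v, hvS, hvmax⟩ := Finset.exists_max_image S id hne
  have hv' := hvS
  simp only [hS, Finset.mem_filter, Finset.mem_image] at hv'
  obtain ⟨⟨c, _, hc⟩, hvb⟩ := hv'
  refine ⟨c, ?_⟩
  have : (Finset.univ.image f).filter (· < f c) = S.erase v := by
    ext w
    simp only [Finset.mem_erase, hS, Finset.mem_filter, hc]
    constructor
    · rintro ⟨hw, hwv⟩
      exact ⟨by omega, hw, by omega⟩
    · rintro ⟨hwv, hw, hwb⟩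
      have := hvmax w (by rw [hS, Finset.mem_filter]; exact ⟨hw, hwb⟩)
      simp only [id] at this
      exact ⟨hw, by omega⟩
  rw [rnkAux] at h ⊢
  rw [this, Finset.card_erase_of_mem hvS]
  rw [← hS] at h
  omega

lemma rnkAux_min (f : β → ℕ) {b : β} (h : ∀ c, f b ≤ f c) : rnkAux f b = 0 := by
  rw [rnkAux, Finset.card_eq_zero, Finset.filter_eq_empty_iff]
  intro v hv
  simp only [Finset.mem_image] at hv
  obtain ⟨c, _, rfl⟩ := hv
  simpa using h c

lemma rnkAux_vals (f : β → ℕ) {b : β} (h3 : rnkAux f b = 3) (hfb : f b = 3) :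
    ∀ v < 3, ∃ c, f c = v := by
  have hsub : ((Finset.univ.image f).filter (· < f b)) ⊆ Finset.range 3 := by
    intro v hv
    simp only [Finset.mem_filter, hfb] at hv
    simpa using hv.2
  have heq : ((Finset.univ.image f).filter (· < f b)) = Finset.range 3 :=
    Finset.eq_of_subset_of_card_le hsub (by rw [rnkAux] at h3; rw [h3]; simp)
  intro v hv
  have : v ∈ (Finset.univ.image f).filter (· < f b) := by
    rw [heq]; simpa using hv
  simp only [Finset.mem_filter, Finset.mem_image] at this
  obtain ⟨⟨c, _, hc⟩, _⟩ := this
  exact ⟨c, hc⟩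

end RnkAux

/-! ### Counting -/

/-- The "good patterns": functions `β → Fin 3` that attain `0`, and attain `1` whenever
they attain `2`. -/
def GoodPat {β : Type*} (g : β → Fin 3) : Prop :=
  (∃ b, g b = 0) ∧ ((∃ b, g b = 2) → ∃ b, g b = 1)

lemma fin3_cases (x : Fin 3) : x = 0 ∨ x = 1 ∨ x = 2 := by revert x; decide

lemma card_avoid {β : Type*} [Fintype β] [DecidableEq β] {k : ℕ} (hk : Fintype.card β = k)
    (v : Fin 3) : Fintype.card {g : β → Fin 3 // ∀ b, g b ≠ v} = 2 ^ k := by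
  classical
  have e : {g : β → Fin 3 // ∀ b, g b ≠ v} ≃ (β → {x : Fin 3 // x ≠ v}) :=
    Equiv.subtypePiEquivPi (β := fun _ : β => Fin 3) (p := fun _ x => x ≠ v)
  rw [Fintype.card_congr e, Fintype.card_fun, hk]
  congr 1
  rw [Fintype.card_subtype_compl, Fintype.card_fin, Fintype.card_subtype_eq]

lemma count_good {β : Type*} [Fintype β] {k : ℕ} (hk : Fintype.card β = k)
    [Fintype {g : β → Fin 3 // GoodPat g}] :
    Fintype.card {g : β → Fin 3 // GoodPat g} + (2 ^ (k + 1) - 2) ≤ 3 ^ k := by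
  classical
  have hinj : Function.Injective
      (Sum.elim (fun a : {g : β → Fin 3 // GoodPat g} => a.1)
        (Sum.elim (fun a : {g : β → Fin 3 // ∀ b, g b ≠ 0} => a.1)
          (fun a : {g : β → Fin 3 // (∃ b, g b = 0) ∧ (∀ b, g b ≠ 1) ∧ ∃ b, g b = 2} =>
            a.1))) := by
    rintro (⟨a, ha⟩ | ⟨a, ha⟩ | ⟨a, ha⟩) (⟨c, hc⟩ | ⟨c, hc⟩ | ⟨c, hc⟩) h <;>
      simp only [Sum.elim_inl, Sum.elim_inr] at h <;> subst h
    · rfl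
    · obtain ⟨b, hb⟩ := ha.1; exact absurd hb (hc b)
    · obtain ⟨b, hb⟩ := ha.2 hc.2.2; exact absurd hb (hc.2.1 b)
    · obtain ⟨b, hb⟩ := hc.1; exact absurd hb (ha b)
    · rfl
    · obtain ⟨b, hb⟩ := hc.1; exact absurd hb (ha b)
    · obtain ⟨b, hb⟩ := hc.2 ha.2.2; exact absurd hb (ha.2.1 b)
    · obtain ⟨b, hb⟩ := ha.1; exact absurd hb (hc b)
    · rfl
  have hcardle := Fintype.card_le_of_injective _ hinj
  rw [Fintype.card_sum, Fintype.card_sum, Fintype.card_fun, Fintype.card_fin, hk,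
    card_avoid hk 0] at hcardle
  have hQ2card : 2 ^ k ≤
      Fintype.card {g : β → Fin 3 // (∃ b, g b = 0) ∧ (∀ b, g b ≠ 1) ∧ ∃ b, g b = 2} + 2 := by
    have hconst : ∀ (g : β → Fin 3), (∀ b, g b ≠ 1) → (¬∃ b, g b = 2) → g = fun _ => 0 := by
      intro g hg1 hg2
      funext b
      rcases fin3_cases (g b) with h | h | h
      · exact h
      · exact absurd h (hg1 b)
      · exact absurd ⟨b, h⟩ hg2
    have hconst2 : ∀ (g : β → Fin 3), (∀ b, g b ≠ 1) → (¬∃ b, g b = 0) → g = fun _ => 2 := by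
      intro g hg1 hg0
      funext b
      rcases fin3_cases (g b) with h | h | h
      · exact absurd ⟨b, h⟩ hg0
      · exact absurd h (hg1 b)
      · exact h
    have hψ : Function.Injective
        (fun a : {g : β → Fin 3 // ∀ b, g b ≠ 1} =>
          (if h0 : ∃ b, a.1 b = 0 then
            (if h2 : ∃ b, a.1 b = 2 then Sum.inl ⟨a.1, h0, a.2, h2⟩ else Sum.inr false)
          else Sum.inr true :
            {g : β → Fin 3 // (∃ b, g b = 0) ∧ (∀ b, g b ≠ 1) ∧ ∃ b, g b = 2} ⊕ Bool)) := by
      rintro ⟨a, ha⟩ ⟨c, hc⟩ h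
      simp only at h
      apply Subtype.ext
      simp only
      by_cases h0a : ∃ b, a b = 0
      · by_cases h0c : ∃ b, c b = 0
        · rw [dif_pos h0a, dif_pos h0c] at h
          by_cases h2a : ∃ b, a b = 2
          · by_cases h2c : ∃ b, c b = 2
            · rw [dif_pos h2a, dif_pos h2c] at h
              simpa using h
            · rw [dif_pos h2a, dif_neg h2c] at h; exact absurd h (by simp)
          · by_cases h2c : ∃ b, c b = 2
            · rw [dif_neg h2a, dif_pos h2c] at h; exact absurd h (by simp)
            · exact (hconst a ha h2a).trans (hconst c hc h2c).symm
        · rw [dif_pos h0a, dif_neg h0c] at h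
          by_cases h2a : ∃ b, a b = 2
          · rw [dif_pos h2a] at h; exact absurd h (by simp)
          · rw [dif_neg h2a] at h; exact absurd h (by simp)
      · by_cases h0c : ∃ b, c b = 0
        · rw [dif_neg h0a, dif_pos h0c] at h
          by_cases h2c : ∃ b, c b = 2
          · rw [dif_pos h2c] at h; exact absurd h (by simp)
          · rw [dif_neg h2c] at h; exact absurd h (by simp)
        · exact (hconst2 a ha h0a).trans (hconst2 c hc h0c).symm
    have hle := Fintype.card_le_of_injective _ hψ
    rw [Fintype.card_sum, Fintype.card_bool, card_avoid hk 1] at hle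
    exact hle
  obtain ⟨A, hA⟩ : ∃ A, Fintype.card {g : β → Fin 3 // GoodPat g} = A := ⟨_, rfl⟩
  obtain ⟨C, hC⟩ : ∃ C,
      Fintype.card {g : β → Fin 3 // (∃ b, g b = 0) ∧ (∀ b, g b ≠ 1) ∧ ∃ b, g b = 2} = C :=
    ⟨_, rfl⟩
  rw [hA] at hcardle ⊢
  rw [hC] at hcardle hQ2card
  have hp : 0 < 2 ^ k := pow_pos (by norm_num) _
  rw [pow_succ]
  clear * - hcardle hQ2card hp
  omega

lemma two_pow_succ_le_three_pow : ∀ k, 2 ≤ k → 2 ^ (k + 1) ≤ 3 ^ k := by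
  intro k hk
  induction k with
  | zero => omega
  | succ n ih =>
    by_cases h2 : 2 ≤ n
    · have h3 := ih h2
      have e1 : 2 ^ (n + 2) = 2 * 2 ^ (n + 1) := by ring
      have e2 : 3 ^ (n + 1) = 3 * 3 ^ n := by ring
      have e3 : 2 ^ (n + 1 + 1) = 2 ^ (n + 2) := rfl
      omega
    · have hn : n = 1 ∨ n = 0 := by omega
      rcases hn with rfl | rfl
      · norm_num
      · omega

/-! ### Main theorem -/

theorem card_le_of_diam_three {V : Type*} [Fintype V] (G : SimpleGraph V)
    (hG : G.Connected) (hdiam : G.diam = 3) (k : ℕ) (hk : CD G = k) (hk5 : 5 ≤ k) :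
    Fintype.card V ≤ 3 ^ k - 2 ^ (k + 1) + 2 := by
  classical
  -- obtain a centroidal locating set of size k
  have hSne : {k' | ∃ B : Set V, B.ncard = k' ∧ CentroidalLocating G B}.Nonempty := by
    by_contra h
    rw [Set.not_nonempty_iff_eq_empty] at h
    rw [CD, h, Nat.sInf_empty] at hk
    omega
  have hmem := Nat.sInf_mem hSne
  rw [← CD, hk] at hmem
  obtain ⟨B, hBk, hloc⟩ := hmem
  haveI : Fintype ↥B := Fintype.ofFinite _
  have hcardB : Fintype.card ↥B = k := by
    rw [← Nat.card_eq_fintype_card, Nat.card_coe_set_eq, hBk]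
  haveI hBne : Nonempty ↥B := Fintype.card_pos_iff.mp (by omega)
  -- distance facts
  have hediam : G.ediam ≠ ⊤ := G.ediam_ne_top_of_diam_ne_zero (by rw [hdiam]; norm_num)
  have hd3 : ∀ (y x : V), G.dist y x ≤ 3 := fun y x => hdiam ▸ G.dist_le_diam hediam
  have hd0 : ∀ (y x : V), G.dist y x = 0 ↔ y = x := fun y x => hG.dist_eq_zero_iff
  -- the distance function to the locating set
  set F : V → ↥B → ℕ := fun y b => G.dist y ↑b with hF
  -- structure of 4-level vertices
  have hFour : ∀ y : V, (∃ b, rnkAux (F y) b = 3) →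
      (y ∈ B ∧ (∃ b1 : ↥B, G.dist y ↑b1 = 1) ∧ ∃ b3 : ↥B, G.dist y ↑b3 = 3) := by
    intro y ⟨b, hb⟩
    have hdb : F y b = 3 := le_antisymm (hd3 y b) (hb ▸ rnkAux_le_self (F y) b)
    have hv := rnkAux_vals (F y) hb hdb
    obtain ⟨c0, hc0⟩ := hv 0 (by norm_num)
    have hy0 : y = ↑c0 := (hd0 y ↑c0).mp hc0
    obtain ⟨c1, hc1⟩ := hv 1 (by norm_num)
    exact ⟨hy0 ▸ c0.2, ⟨c1, hc1⟩, ⟨b, hdb⟩⟩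
  -- rank is at most 2 for non-4-level vertices
  have hle2 : ∀ y : V, ¬(∃ b, rnkAux (F y) b = 3) → ∀ b, rnkAux (F y) b ≤ 2 := by
    intro y h4 b
    have h1 := rnkAux_le_self (F y) b
    have h2 : F y b ≤ 3 := hd3 y ↑b
    have h3 : rnkAux (F y) b ≠ 3 := fun h => h4 ⟨b, h⟩
    omega
  -- the pattern map
  set ρ : V → ↥B → Fin 3 := fun y =>
    if h : ∃ b, rnkAux (F y) b = 3 then
      fun b => if (↑b : V) = y then 0 else if G.dist y ↑b = 3 then 1 else 2
    else fun b => ⟨min (rnkAux (F y) b) 2, by omega⟩ with hρ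
  -- every pattern is good
  have hmemP : ∀ y : V, GoodPat (ρ y) := by
    intro y
    by_cases h4 : ∃ b, rnkAux (F y) b = 3
    · obtain ⟨hyB, ⟨b1, hb1⟩, ⟨b3, hb3⟩⟩ := hFour y h4
      have hb3y : (↑b3 : V) ≠ y := by
        intro h
        rw [h] at hb3
        rw [(hd0 y y).mpr rfl] at hb3
        omega
      constructor
      · refine ⟨⟨y, hyB⟩, ?_⟩
        rw [hρ]
        simp only [dif_pos h4]
        simp only [if_true]
      · intro _
        refine ⟨b3, ?_⟩
        rw [hρ]
        simp only [dif_pos h4]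
        rw [if_neg hb3y, if_pos hb3]
    · constructor
      · obtain ⟨b0, _, hb0⟩ :=
          Finset.exists_min_image Finset.univ (F y) Finset.univ_nonempty
        have h0 : rnkAux (F y) b0 = 0 := rnkAux_min _ (fun c => hb0 c (Finset.mem_univ c))
        refine ⟨b0, ?_⟩
        rw [hρ]
        simp only [dif_neg h4]
        rw [Fin.ext_iff]
        simp [h0]
      · rintro ⟨b, hb⟩
        rw [hρ] at hb
        simp only [dif_neg h4] at hb
        rw [Fin.ext_iff] at hb
        simp only [Fin.val_two] at hb
        have hb2 : rnkAux (F y) b = 2 := by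
          have := hle2 y h4 b
          omega
        obtain ⟨c, hc⟩ := rnkAux_pred (F y) (m := 1) hb2
        refine ⟨c, ?_⟩
        rw [hρ]
        simp only [dif_neg h4]
        rw [Fin.ext_iff]
        simp [hc]
  -- injectivity of the pattern map
  have hinj : Function.Injective ρ := by
    -- the mixed case
    have hmix : ∀ x y : V, (∃ b, rnkAux (F x) b = 3) → ¬(∃ b, rnkAux (F y) b = 3) →
        ρ x = ρ y → False := by
      intro x y h4x h4y heq
      obtain ⟨hxB, ⟨b1, hb1⟩, ⟨b3, hb3⟩⟩ := hFour x h4x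
      have hxy : x ≠ y := fun h => h4y (h ▸ h4x)
      have hb1x : (↑b1 : V) ≠ x := by
        intro h; rw [h, (hd0 x x).mpr rfl] at hb1; omega
      have hb3x : (↑b3 : V) ≠ x := by
        intro h; rw [h, (hd0 x x).mpr rfl] at hb3; omega
      set bx : ↥B := ⟨x, hxB⟩ with hbx
      have hvbx : (↑bx : V) = x := rfl
      -- evaluate the equality at bx, b3, b1
      have ebx := congrFun heq bx
      have eb3 := congrFun heq b3
      have eb1 := congrFun heq b1
      rw [hρ] at ebx eb3 eb1
      simp only [dif_pos h4x, dif_neg h4y] at ebx eb3 eb1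
      rw [if_pos hvbx] at ebx
      rw [if_neg hb3x, if_pos hb3] at eb3
      rw [if_neg hb1x, if_neg (by rw [hb1]; omega)] at eb1
      rw [Fin.ext_iff] at ebx eb3 eb1
      simp only [Fin.val_zero, Fin.val_one, Fin.val_two] at ebx eb3 eb1
      have r0 : rnkAux (F y) bx = 0 := by omega
      have r1 : rnkAux (F y) b3 = 1 := by omega
      have r2 : 2 ≤ rnkAux (F y) b1 := by omega
      have s1 : F y bx < F y b3 := (rnkAux_lt_iff (F y) bx b3).mp (by omega)
      have s2 : F y b3 < F y b1 := (rnkAux_lt_iff (F y) b3 b1).mp (by omega)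
      have htri : G.dist y ↑b1 ≤ G.dist y x + G.dist x ↑b1 := hG.dist_triangle
      have hFbx : F y bx = G.dist y x := rfl
      have hFb1 : F y b1 = G.dist y ↑b1 := rfl
      have hFb3 : F y b3 = G.dist y ↑b3 := rfl
      rw [hb1] at htri
      omega
    intro x y heq
    by_cases h4x : ∃ b, rnkAux (F x) b = 3 <;> by_cases h4y : ∃ b, rnkAux (F y) b = 3
    · by_contra hne
      obtain ⟨hxB, _, _⟩ := hFour x h4x
      have e := congrFun heq ⟨x, hxB⟩
      rw [hρ] at e
      simp only [dif_pos h4x, dif_pos h4y] at e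
      simp only [if_true] at e
      rw [if_neg hne] at e
      by_cases h3 : G.dist y x = 3
      · rw [if_pos h3] at e; exact absurd e (by decide)
      · rw [if_neg h3] at e; exact absurd e (by decide)
    · exact (hmix x y h4x h4y heq).elim
    · exact (hmix y x h4y h4x heq.symm).elim
    · by_contra hne
      have hrnkeq : ∀ b, rnkAux (F x) b = rnkAux (F y) b := by
        intro b
        have e := congrFun heq b
        rw [hρ] at e
        simp only [dif_neg h4x, dif_neg h4y] at e
        rw [Fin.ext_iff] at e
        simp only at e
        have hx2 := hle2 x h4x b
        have hy2 := hle2 y h4y b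
        omega
      obtain ⟨b1, hb1B, b2, hb2B, hcase⟩ := hloc hne
      set B1 : ↥B := ⟨b1, hb1B⟩ with hB1
      set B2 : ↥B := ⟨b2, hb2B⟩ with hB2
      have key : G.dist x b1 ≤ G.dist x b2 ↔ G.dist y b1 ≤ G.dist y b2 := by
        have h1 : G.dist x b1 ≤ G.dist x b2 ↔ rnkAux (F x) B1 ≤ rnkAux (F x) B2 :=
          (rnkAux_le_iff (F x) B1 B2).symm
        have h2 : G.dist y b1 ≤ G.dist y b2 ↔ rnkAux (F y) B1 ≤ rnkAux (F y) B2 :=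
          (rnkAux_le_iff (F y) B1 B2).symm
        rw [h1, h2, hrnkeq B1, hrnkeq B2]
      rcases hcase with ⟨h1, h2⟩ | ⟨h1, h2⟩
      · have := key.mp h1
        omega
      · have := key.mpr h1
        omega
  -- conclude by counting
  have hcardle : Fintype.card V ≤ Fintype.card {g : ↥B → Fin 3 // GoodPat g} :=
    Fintype.card_le_of_injective (fun y => ⟨ρ y, hmemP y⟩)
      (fun x y h => hinj (congrArg Subtype.val h))
  have hcount := count_good hcardB
  obtain ⟨A, hA⟩ : ∃ A, Fintype.card {g : ↥B → Fin 3 // GoodPat g} = A := ⟨_, rfl⟩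
  rw [hA] at hcardle hcount
  have hple : 2 ^ (k + 1) ≤ 3 ^ k := two_pow_succ_le_three_pow k (by omega)
  have hp2 : 2 ≤ 2 ^ (k + 1) := by
    calc 2 = 2 ^ 1 := by norm_num
    _ ≤ 2 ^ (k + 1) := Nat.pow_le_pow_right (by norm_num) (by omega)
  clear * - hcardle hcount hple hp2
  omega
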